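/- Let N ≥ 1 and let p_1,…,p_N, x_1,…,x_N : ℝ → ℝ be differentiable functions with p_i(t) > 0 and x_1(t) > x_2(t) > ⋯ > x_N(t) for all t, satisfying the Camassa–Holm peakon system: dp_i/dt = −p_i Σ_{j=1}^{i−1} p_j e^{x_i−x_j} + p_i Σ_{j=i+1}^{N} p_j e^{x_j−x_i} and dx_i/dt = Σ_{j=1}^{i−1} p_j e^{x_i−x_j} + p_i + Σ_{j=i+1}^{N} p_j e^{x_j−x_i}. Let 𝒜(t) be the N×N matrix with entries 𝒜(t)_{ij} := √(p_i(t)p_j(t)) e^{(x_{max(i,j)}(t) − x_{min(i,j)}(t))/2}, and assume 𝒜(t) is invertible for every t. Then A(t) := 𝒜(t)^{−1} is differentiable entrywise and satisfies dA(t)/dt = A(t)Π(A(t)^{−1}) − Π(A(t)^{−1})A(t). -/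

import Mathlib

open Finset

/-- Strictly lower triangular part of a matrix. -/
def lowerPart {N : ℕ} (M : Matrix (Fin N) (Fin N) ℝ) : Matrix (Fin N) (Fin N) ℝ :=
  Matrix.of fun i j => if j < i then M i j else 0

/-- Strictly upper triangular part of a matrix. -/
def upperPart {N : ℕ} (M : Matrix (Fin N) (Fin N) ℝ) : Matrix (Fin N) (Fin N) ℝ :=
  Matrix.of fun i j => if i < j then M i j else 0

/-- Π(M) := (1/2) M_< − (1/2) M_>. -/
noncomputable def PiMap {N : ℕ} (M : Matrix (Fin N) (Fin N) ℝ) : Matrix (Fin N) (Fin N) ℝ :=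
  (1 / 2 : ℝ) • lowerPart M - (1 / 2 : ℝ) • upperPart M

/-- The semiseparable peakon matrix 𝒜(t). -/
noncomputable def calA {N : ℕ} (p x : Fin N → ℝ → ℝ) (t : ℝ) : Matrix (Fin N) (Fin N) ℝ :=
  Matrix.of fun i j =>
    Real.sqrt (p i t * p j t) * Real.exp ((x (max i j) t - x (min i j) t) / 2)

/-- A(t) := 𝒜(t)⁻¹. -/
noncomputable def triA {N : ℕ} (p x : Fin N → ℝ → ℝ) (t : ℝ) : Matrix (Fin N) (Fin N) ℝ :=
  (calA p x t)⁻¹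

section Helpers

variable {N : ℕ} (p x : Fin N → ℝ → ℝ)

/-- sign coefficient of `PiMap`. -/
noncomputable def sPi {N : ℕ} (a b : Fin N) : ℝ :=
  (if b < a then (1:ℝ)/2 else 0) - (if a < b then (1:ℝ)/2 else 0)

lemma PiMap_apply {N : ℕ} (M : Matrix (Fin N) (Fin N) ℝ) (a b : Fin N) :
    PiMap M a b = sPi a b * M a b := by
  simp only [PiMap, lowerPart, upperPart, sPi, Matrix.sub_apply, Matrix.smul_apply,
    Matrix.of_apply, smul_eq_mul, mul_ite, mul_zero, ite_mul, zero_mul, sub_mul]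

lemma sPi_anti {N : ℕ} (a b : Fin N) : sPi a b = - sPi b a := by
  unfold sPi
  rcases lt_trichotomy a b with h | rfl | h
  · simp [h, asymm h]
  · simp
  · simp [h, asymm h]

lemma calA_apply (t : ℝ) (i j : Fin N) :
    calA p x t i j = Real.sqrt (p i t * p j t) * Real.exp ((x (max i j) t - x (min i j) t) / 2) := rfl

lemma calA_symm (t : ℝ) (i j : Fin N) : calA p x t i j = calA p x t j i := by
  simp only [calA_apply]
  rw [mul_comm (p i t), max_comm, min_comm]

lemma calA_diag (hppos : ∀ i t, 0 < p i t) (t : ℝ) (i : Fin N) : calA p x t i i = p i t := by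
  simp [calA_apply, Real.sqrt_mul_self (hppos i t).le]

lemma sqrt_helper (hppos : ∀ i t, 0 < p i t) (t : ℝ) (i j k : Fin N) :
    Real.sqrt (p i t * p k t) * Real.sqrt (p k t * p j t) = p k t * Real.sqrt (p i t * p j t) := by
  rw [← Real.sqrt_mul (mul_pos (hppos i t) (hppos k t)).le,
    show p i t * p k t * (p k t * p j t) = (p k t)^2 * (p i t * p j t) from by ring,
    Real.sqrt_mul (sq_nonneg _), Real.sqrt_sq (hppos k t).le]

lemma calA_prod_lt (hppos : ∀ i t, 0 < p i t) (t : ℝ) {i j k : Fin N} (hk : k < i) (hij : i ≤ j) :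
    calA p x t i k * calA p x t k j = calA p x t i j * (p k t * Real.exp (x i t - x k t)) := by
  have hk' : k ≤ j := le_trans hk.le hij
  simp only [calA_apply, max_eq_left hk.le, min_eq_right hk.le, max_eq_right hk',
    min_eq_left hk', max_eq_right hij, min_eq_left hij]
  calc Real.sqrt (p i t * p k t) * Real.exp ((x i t - x k t)/2) *
        (Real.sqrt (p k t * p j t) * Real.exp ((x j t - x k t)/2))
      = (Real.sqrt (p i t * p k t) * Real.sqrt (p k t * p j t)) *
        (Real.exp ((x i t - x k t)/2) * Real.exp ((x j t - x k t)/2)) := by ring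
    _ = p k t * Real.sqrt (p i t * p j t) * Real.exp ((x i t - x k t)/2 + (x j t - x k t)/2) := by
        rw [sqrt_helper p hppos, ← Real.exp_add]
    _ = _ := by
        rw [show (x i t - x k t)/2 + (x j t - x k t)/2 = (x j t - x i t)/2 + (x i t - x k t) from by
          ring, Real.exp_add]
        ring

lemma calA_prod_gt (hppos : ∀ i t, 0 < p i t) (t : ℝ) {i j k : Fin N} (hij : i ≤ j) (hk : j < k) :
    calA p x t i k * calA p x t k j = calA p x t i j * (p k t * Real.exp (x k t - x j t)) := by
  have hk' : i ≤ k := le_trans hij hk.le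
  simp only [calA_apply, max_eq_right hk', min_eq_left hk', max_eq_left hk.le,
    min_eq_right hk.le, max_eq_right hij, min_eq_left hij]
  calc Real.sqrt (p i t * p k t) * Real.exp ((x k t - x i t)/2) *
        (Real.sqrt (p k t * p j t) * Real.exp ((x k t - x j t)/2))
      = (Real.sqrt (p i t * p k t) * Real.sqrt (p k t * p j t)) *
        (Real.exp ((x k t - x i t)/2) * Real.exp ((x k t - x j t)/2)) := by ring
    _ = p k t * Real.sqrt (p i t * p j t) * Real.exp ((x k t - x i t)/2 + (x k t - x j t)/2) := by
        rw [sqrt_helper p hppos, ← Real.exp_add]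
    _ = _ := by
        rw [show (x k t - x i t)/2 + (x k t - x j t)/2 = (x j t - x i t)/2 + (x k t - x j t) from by
          ring, Real.exp_add]
        ring

lemma calA_hasDeriv (hpdiff : ∀ i, Differentiable ℝ (p i)) (hxdiff : ∀ i, Differentiable ℝ (x i))
    (hppos : ∀ i t, 0 < p i t) (i j : Fin N) (t : ℝ) :
    HasDerivAt (fun s => calA p x s i j)
      (calA p x t i j * (deriv (p i) t / (2 * p i t) + deriv (p j) t / (2 * p j t)
        + (deriv (x (max i j)) t - deriv (x (min i j)) t) / 2)) t := by
  have hu : HasDerivAt (fun s => p i s * p j s)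
      (deriv (p i) t * p j t + p i t * deriv (p j) t) t :=
    ((hpdiff i t).hasDerivAt).mul ((hpdiff j t).hasDerivAt)
  have hupos : 0 < p i t * p j t := mul_pos (hppos i t) (hppos j t)
  have hs : HasDerivAt (fun s => Real.sqrt (p i s * p j s))
      ((deriv (p i) t * p j t + p i t * deriv (p j) t) / (2 * Real.sqrt (p i t * p j t))) t :=
    hu.sqrt (ne_of_gt hupos)
  have hw : HasDerivAt (fun s => (x (max i j) s - x (min i j) s) / 2)
      ((deriv (x (max i j)) t - deriv (x (min i j)) t) / 2) t :=
    (((hxdiff (max i j) t).hasDerivAt).sub ((hxdiff (min i j) t).hasDerivAt)).div_const 2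
  have he := hw.exp
  have h := hs.fun_mul he
  refine h.congr_deriv (Eq.symm ?_)
  rw [calA_apply]
  have hsne : Real.sqrt (p i t * p j t) ≠ 0 := ne_of_gt (Real.sqrt_pos.mpr hupos)
  have hsq : Real.sqrt (p i t * p j t) * Real.sqrt (p i t * p j t) = p i t * p j t :=
    Real.mul_self_sqrt hupos.le
  have expand : deriv (p i) t / (2 * p i t) + deriv (p j) t / (2 * p j t)
      = (deriv (p i) t * p j t + p i t * deriv (p j) t) / (2 * (p i t * p j t)) := by
    field_simp [(hppos i t).ne', (hppos j t).ne']
  have key : Real.sqrt (p i t * p j t) * (deriv (p i) t / (2 * p i t) + deriv (p j) t / (2 * p j t))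
      = (deriv (p i) t * p j t + p i t * deriv (p j) t) / (2 * Real.sqrt (p i t * p j t)) := by
    rw [expand]
    rw [mul_div_assoc', div_eq_div_iff (mul_ne_zero two_ne_zero hupos.ne') (mul_ne_zero two_ne_zero hsne)]
    linear_combination (2 * (deriv (p i) t * p j t + p i t * deriv (p j) t)) * hsq
  calc Real.sqrt (p i t * p j t) * Real.exp ((x (max i j) t - x (min i j) t) / 2) *
        (deriv (p i) t / (2 * p i t) + deriv (p j) t / (2 * p j t)
          + (deriv (x (max i j)) t - deriv (x (min i j)) t) / 2)
      = (Real.sqrt (p i t * p j t) * (deriv (p i) t / (2 * p i t) + deriv (p j) t / (2 * p j t)))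
          * Real.exp ((x (max i j) t - x (min i j) t) / 2)
        + Real.sqrt (p i t * p j t) * (Real.exp ((x (max i j) t - x (min i j) t) / 2)
          * ((deriv (x (max i j)) t - deriv (x (min i j)) t) / 2)) := by ring
    _ = _ := by rw [key]

lemma calA_diff (hpdiff : ∀ i, Differentiable ℝ (p i)) (hxdiff : ∀ i, Differentiable ℝ (x i))
    (hppos : ∀ i t, 0 < p i t) (i j : Fin N) :
    Differentiable ℝ (fun s => calA p x s i j) := fun t =>
  (calA_hasDeriv p x hpdiff hxdiff hppos i j t).differentiableAt

/-- lower interaction sum. -/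
noncomputable def Lsum (p x : Fin N → ℝ → ℝ) (i : Fin N) (t : ℝ) : ℝ :=
  ∑ k ∈ Finset.univ.filter (fun k => k < i), p k t * Real.exp (x i t - x k t)

/-- upper interaction sum. -/
noncomputable def Usum (p x : Fin N → ℝ → ℝ) (i : Fin N) (t : ℝ) : ℝ :=
  ∑ k ∈ Finset.univ.filter (fun k => i < k), p k t * Real.exp (x k t - x i t)

lemma comm_apply (hppos : ∀ i t, 0 < p i t) (t : ℝ) {i j : Fin N} (hij : i ≤ j) :
    (calA p x t * PiMap (calA p x t) - PiMap (calA p x t) * calA p x t) i j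
      = calA p x t i j * (-(Lsum p x i t) + Usum p x j t + (p j t - p i t) / 2) := by
  have hsplit : ∀ k : Fin N,
      calA p x t i k * PiMap (calA p x t) k j - PiMap (calA p x t) i k * calA p x t k j
      = -(if k < i then calA p x t i j * (p k t * Real.exp (x i t - x k t)) else 0)
        + (if j < k then calA p x t i j * (p k t * Real.exp (x k t - x j t)) else 0)
        + ((if k = i then -(p i t / 2 * calA p x t i j) else 0)
           + (if k = j then p j t / 2 * calA p x t i j else 0)) := by
    intro k
    rw [PiMap_apply, PiMap_apply]
    rcases lt_trichotomy k i with hki | heq | hik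
    · have hkj : k < j := lt_of_lt_of_le hki hij
      have hP1 : sPi k j = -(1/2) := by simp [sPi, hkj, asymm hkj]
      have hP2 : sPi i k = 1/2 := by simp [sPi, hki, asymm hki]
      rw [if_pos hki, if_neg (asymm hkj), if_neg hki.ne, if_neg hkj.ne, hP1, hP2]
      have hp := calA_prod_lt p x hppos t hki hij
      linear_combination -hp
    · subst heq
      rw [if_neg (lt_irrefl k), if_neg (fun h : j < k => absurd hij (not_le.mpr h))]
      have hP2 : sPi k k = 0 := by simp [sPi]
      rcases eq_or_lt_of_le hij with heq2 | hlt
      · subst heq2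
        simp [hP2]
      · have hP1 : sPi k j = -(1/2) := by simp [sPi, hlt, asymm hlt]
        rw [if_pos rfl, if_neg hlt.ne, hP1, hP2, calA_diag p x hppos]
        ring
    · have hki' : ¬ k < i := asymm hik
      have hne : k ≠ i := hik.ne'
      rcases lt_trichotomy k j with hkj | rfl | hjk
      · have hP1 : sPi k j = -(1/2) := by simp [sPi, hkj, asymm hkj]
        have hP2 : sPi i k = -(1/2) := by simp [sPi, hik, asymm hik]
        rw [if_neg hki', if_neg (asymm hkj), if_neg hne, if_neg hkj.ne, hP1, hP2]
        ring
      · have hP1 : sPi k k = 0 := by simp [sPi]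
        have hP2 : sPi i k = -(1/2) := by simp [sPi, hik, asymm hik]
        rw [if_neg hki', if_neg (lt_irrefl k), if_neg hne, if_pos rfl, hP1, hP2,
          calA_diag p x hppos]
        ring
      · have hP1 : sPi k j = 1/2 := by simp [sPi, hjk, asymm hjk]
        have hP2 : sPi i k = -(1/2) := by simp [sPi, hik, asymm hik]
        rw [if_neg hki', if_pos hjk, if_neg hne, if_neg (ne_of_gt hjk), hP1, hP2]
        have hp := calA_prod_gt p x hppos t hij hjk
        linear_combination hp
  calc (calA p x t * PiMap (calA p x t) - PiMap (calA p x t) * calA p x t) i j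
      = ∑ k : Fin N, (calA p x t i k * PiMap (calA p x t) k j
          - PiMap (calA p x t) i k * calA p x t k j) := by
        simp [Matrix.sub_apply, Matrix.mul_apply, Finset.sum_sub_distrib]
    _ = ∑ k : Fin N,
        (-(if k < i then calA p x t i j * (p k t * Real.exp (x i t - x k t)) else 0)
        + (if j < k then calA p x t i j * (p k t * Real.exp (x k t - x j t)) else 0)
        + ((if k = i then -(p i t / 2 * calA p x t i j) else 0)
           + (if k = j then p j t / 2 * calA p x t i j else 0))) :=
        Finset.sum_congr rfl fun k _ => hsplit k
    _ = -(∑ k ∈ Finset.univ.filter (fun k => k < i),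
            calA p x t i j * (p k t * Real.exp (x i t - x k t)))
        + (∑ k ∈ Finset.univ.filter (fun k => j < k),
            calA p x t i j * (p k t * Real.exp (x k t - x j t)))
        + (-(p i t / 2 * calA p x t i j) + p j t / 2 * calA p x t i j) := by
        rw [Finset.sum_add_distrib, Finset.sum_add_distrib, Finset.sum_add_distrib,
          Finset.sum_neg_distrib, ← Finset.sum_filter, ← Finset.sum_filter]
        simp
    _ = _ := by
        unfold Lsum Usum
        rw [← Finset.mul_sum, ← Finset.mul_sum]
        ring

lemma comm_symm (t : ℝ) (i j : Fin N) :
    (calA p x t * PiMap (calA p x t) - PiMap (calA p x t) * calA p x t) i j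
      = (calA p x t * PiMap (calA p x t) - PiMap (calA p x t) * calA p x t) j i := by
  simp only [Matrix.sub_apply, Matrix.mul_apply, ← Finset.sum_sub_distrib]
  refine Finset.sum_congr rfl fun k _ => ?_
  rw [PiMap_apply, PiMap_apply, PiMap_apply, PiMap_apply,
    calA_symm p x t j k, calA_symm p x t k i]
  linear_combination (calA p x t i k * calA p x t k j) * (sPi_anti k j - sPi_anti i k)

lemma bracket (hppos : ∀ i t, 0 < p i t)
    (hpeq : ∀ (i : Fin N) (t : ℝ), deriv (p i) t =
      -(p i t) * ∑ j ∈ Finset.univ.filter (fun j => j < i),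
          p j t * Real.exp (x i t - x j t)
        + p i t * ∑ j ∈ Finset.univ.filter (fun j => i < j),
          p j t * Real.exp (x j t - x i t))
    (hxeq : ∀ (i : Fin N) (t : ℝ), deriv (x i) t =
      (∑ j ∈ Finset.univ.filter (fun j => j < i), p j t * Real.exp (x i t - x j t))
        + p i t
        + ∑ j ∈ Finset.univ.filter (fun j => i < j), p j t * Real.exp (x j t - x i t))
    {i j : Fin N} (t : ℝ) (hij : i ≤ j) :
    deriv (p i) t / (2 * p i t) + deriv (p j) t / (2 * p j t)
      + (deriv (x j) t - deriv (x i) t) / 2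
    = -(Lsum p x i t) + Usum p x j t + (p j t - p i t) / 2 := by
  rw [hpeq i t, hpeq j t, hxeq i t, hxeq j t]
  unfold Lsum Usum
  have h1 : p i t ≠ 0 := (hppos i t).ne'
  have h2 : p j t ≠ 0 := (hppos j t).ne'
  field_simp
  ring

lemma calA_ode_le (hpdiff : ∀ i, Differentiable ℝ (p i)) (hxdiff : ∀ i, Differentiable ℝ (x i))
    (hppos : ∀ i t, 0 < p i t)
    (hpeq : ∀ (i : Fin N) (t : ℝ), deriv (p i) t =
      -(p i t) * ∑ j ∈ Finset.univ.filter (fun j => j < i),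
          p j t * Real.exp (x i t - x j t)
        + p i t * ∑ j ∈ Finset.univ.filter (fun j => i < j),
          p j t * Real.exp (x j t - x i t))
    (hxeq : ∀ (i : Fin N) (t : ℝ), deriv (x i) t =
      (∑ j ∈ Finset.univ.filter (fun j => j < i), p j t * Real.exp (x i t - x j t))
        + p i t
        + ∑ j ∈ Finset.univ.filter (fun j => i < j), p j t * Real.exp (x j t - x i t))
    (t : ℝ) {i j : Fin N} (hij : i ≤ j) :
    deriv (fun s => calA p x s i j) t
      = (calA p x t * PiMap (calA p x t) - PiMap (calA p x t) * calA p x t) i j := by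
  rw [(calA_hasDeriv p x hpdiff hxdiff hppos i j t).deriv, comm_apply p x hppos t hij,
    max_eq_right hij, min_eq_left hij, bracket p x hppos hpeq hxeq t hij]

lemma calA_ode (hpdiff : ∀ i, Differentiable ℝ (p i)) (hxdiff : ∀ i, Differentiable ℝ (x i))
    (hppos : ∀ i t, 0 < p i t)
    (hpeq : ∀ (i : Fin N) (t : ℝ), deriv (p i) t =
      -(p i t) * ∑ j ∈ Finset.univ.filter (fun j => j < i),
          p j t * Real.exp (x i t - x j t)
        + p i t * ∑ j ∈ Finset.univ.filter (fun j => i < j),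
          p j t * Real.exp (x j t - x i t))
    (hxeq : ∀ (i : Fin N) (t : ℝ), deriv (x i) t =
      (∑ j ∈ Finset.univ.filter (fun j => j < i), p j t * Real.exp (x i t - x j t))
        + p i t
        + ∑ j ∈ Finset.univ.filter (fun j => i < j), p j t * Real.exp (x j t - x i t))
    (t : ℝ) (i j : Fin N) :
    deriv (fun s => calA p x s i j) t
      = (calA p x t * PiMap (calA p x t) - PiMap (calA p x t) * calA p x t) i j := by
  rcases le_total i j with hij | hij
  · exact calA_ode_le p x hpdiff hxdiff hppos hpeq hxeq t hij
  · have hfn : (fun s => calA p x s i j) = fun s => calA p x s j i :=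
      funext fun s => calA_symm p x s i j
    rw [hfn, calA_ode_le p x hpdiff hxdiff hppos hpeq hxeq t hij, comm_symm]

lemma det_diff {M : ℝ → Matrix (Fin N) (Fin N) ℝ}
    (h : ∀ a b, Differentiable ℝ fun t => M t a b) :
    Differentiable ℝ (fun t => (M t).det) := by
  have : (fun t => (M t).det)
      = fun t => ∑ σ : Equiv.Perm (Fin N), (Equiv.Perm.sign σ : ℝ) * ∏ a, M t (σ a) a :=
    funext fun t => by rw [Matrix.det_apply]; simp [Units.smul_def, zsmul_eq_mul]
  rw [this]
  refine Differentiable.fun_sum fun σ _ => Differentiable.const_mul ?_ _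
  exact Differentiable.fun_finsetProd fun a _ => h (σ a) a

lemma triA_diff (hpdiff : ∀ i, Differentiable ℝ (p i)) (hxdiff : ∀ i, Differentiable ℝ (x i))
    (hppos : ∀ i t, 0 < p i t) (hinv : ∀ t : ℝ, IsUnit (calA p x t).det) (i j : Fin N) :
    Differentiable ℝ (fun s => triA p x s i j) := by
  have hdet : Differentiable ℝ fun s => (calA p x s).det :=
    det_diff (fun a b => calA_diff p x hpdiff hxdiff hppos a b)
  have hadj : Differentiable ℝ fun s => (calA p x s).adjugate i j := by
    simp only [Matrix.adjugate_apply]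
    refine det_diff fun a b => ?_
    by_cases hab : a = j
    · simp only [Matrix.updateRow_apply, hab, if_pos rfl]
      exact differentiable_const _
    · simp only [Matrix.updateRow_apply, if_neg hab]
      exact calA_diff p x hpdiff hxdiff hppos a b
  have heq : (fun s => triA p x s i j)
      = fun s => ((calA p x s).det)⁻¹ * (calA p x s).adjugate i j := by
    funext s
    rw [triA, Matrix.inv_def, Matrix.smul_apply, smul_eq_mul, Ring.inverse_eq_inv]
  rw [heq]
  intro t
  exact ((hdet t).inv (hinv t).ne_zero).mul (hadj t)

end Helpers


theorem stmt2 (N : ℕ) (hN : 1 ≤ N) (p x : Fin N → ℝ → ℝ)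
    (hpdiff : ∀ i, Differentiable ℝ (p i))
    (hxdiff : ∀ i, Differentiable ℝ (x i))
    (hppos : ∀ i t, 0 < p i t)
    (hxord : ∀ (i j : Fin N), i < j → ∀ t : ℝ, x j t < x i t)
    (hpeq : ∀ (i : Fin N) (t : ℝ), deriv (p i) t =
      -(p i t) * ∑ j ∈ Finset.univ.filter (fun j => j < i),
          p j t * Real.exp (x i t - x j t)
        + p i t * ∑ j ∈ Finset.univ.filter (fun j => i < j),
          p j t * Real.exp (x j t - x i t))
    (hxeq : ∀ (i : Fin N) (t : ℝ), deriv (x i) t =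
      (∑ j ∈ Finset.univ.filter (fun j => j < i), p j t * Real.exp (x i t - x j t))
        + p i t
        + ∑ j ∈ Finset.univ.filter (fun j => i < j), p j t * Real.exp (x j t - x i t))
    (hinv : ∀ t : ℝ, IsUnit (calA p x t).det) :
    (∀ (i j : Fin N) (t : ℝ), DifferentiableAt ℝ (fun s => triA p x s i j) t) ∧
    (∀ (t : ℝ) (i j : Fin N),
      deriv (fun s => triA p x s i j) t
        = (triA p x t * PiMap ((triA p x t)⁻¹) - PiMap ((triA p x t)⁻¹) * triA p x t) i j) := by
  have hAdiff : ∀ (i j : Fin N), Differentiable ℝ (fun s => triA p x s i j) :=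
    fun i j => triA_diff p x hpdiff hxdiff hppos hinv i j
  refine ⟨fun i j t => hAdiff i j t, fun t i j => ?_⟩
  set Ader : Matrix (Fin N) (Fin N) ℝ :=
    Matrix.of fun a b => deriv (fun s => triA p x s a b) t with hAder
  set Mder : Matrix (Fin N) (Fin N) ℝ :=
    Matrix.of fun a b => deriv (fun s => calA p x s a b) t with hMder
  have hAA : ∀ s : ℝ, triA p x s * calA p x s = 1 :=
    fun s => Matrix.nonsing_inv_mul _ (hinv s)
  have h𝒜A : ∀ s : ℝ, calA p x s * triA p x s = 1 :=
    fun s => Matrix.mul_nonsing_inv _ (hinv s)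
  have hder_entry : ∀ a b : Fin N, HasDerivAt (fun s => triA p x s a b) (Ader a b) t :=
    fun a b => (hAdiff a b t).hasDerivAt
  have hM_entry : ∀ a b : Fin N, HasDerivAt (fun s => calA p x s a b) (Mder a b) t :=
    fun a b => (calA_diff p x hpdiff hxdiff hppos a b t).hasDerivAt
  have key1 : Ader * calA p x t + triA p x t * Mder = 0 := by
    ext a b
    have hsum : HasDerivAt (fun s => ∑ k, triA p x s a k * calA p x s k b)
        (∑ k, (Ader a k * calA p x t k b + triA p x t a k * Mder k b)) t :=
      HasDerivAt.fun_sum fun k _ => (hder_entry a k).fun_mul (hM_entry k b)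
    have hconst : (fun s => ∑ k, triA p x s a k * calA p x s k b)
        = fun _ => (1 : Matrix (Fin N) (Fin N) ℝ) a b :=
      funext fun s => by rw [← Matrix.mul_apply, hAA s]
    rw [hconst] at hsum
    have hzero : (∑ k, (Ader a k * calA p x t k b + triA p x t a k * Mder k b)) = 0 :=
      ((hasDerivAt_const t _).unique hsum).symm
    calc (Ader * calA p x t + triA p x t * Mder) a b
        = ∑ k, (Ader a k * calA p x t k b + triA p x t a k * Mder k b) := by
          simp [Matrix.add_apply, Matrix.mul_apply, Finset.sum_add_distrib]
      _ = 0 := hzero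
      _ = (0 : Matrix (Fin N) (Fin N) ℝ) a b := by simp
  have hMeq : Mder = calA p x t * PiMap (calA p x t) - PiMap (calA p x t) * calA p x t := by
    ext a b
    exact calA_ode p x hpdiff hxdiff hppos hpeq hxeq t a b
  have key1' : Ader * calA p x t = -(triA p x t * Mder) :=
    eq_neg_of_add_eq_zero_left key1
  have key2 : Ader = triA p x t * PiMap (calA p x t) - PiMap (calA p x t) * triA p x t := by
    have e1 : triA p x t * calA p x t = 1 := hAA t
    have e2 : calA p x t * triA p x t = 1 := h𝒜A t
    calc Ader = Ader * (calA p x t * triA p x t) := by rw [e2, mul_one]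
      _ = (Ader * calA p x t) * triA p x t := by rw [mul_assoc]
      _ = (-(triA p x t * Mder)) * triA p x t := by rw [key1']
      _ = -((triA p x t * calA p x t) * PiMap (calA p x t) * triA p x t)
          + triA p x t * PiMap (calA p x t) * (calA p x t * triA p x t) := by
          rw [hMeq]; noncomm_ring
      _ = _ := by rw [e1, e2, one_mul, mul_one]; noncomm_ring
  have hAinv : (triA p x t)⁻¹ = calA p x t := by
    rw [triA, Matrix.nonsing_inv_nonsing_inv _ (hinv t)]
  rw [hAinv]
  have : deriv (fun s => triA p x s i j) t = Ader i j := rfl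
  rw [this, key2]
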